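/- arXiv:1205.6422 — 2 statements merged into one kernel-verified Lean document; each statement's English description precedes it below -/
import Mathlib

section
/- Let X be a locally pseudocompact Tychonoff space. Then ζX is the unique (up to equivalence of extensions) pseudocompactification Y of X with compact remainder satisfying: cl_Y S ∩ cl_Y Z ⊆ X for every pair of zero-sets S and Z of X such that S ∩ Z is contained in a cozero-set of X with pseudocompact closure in X. -/
open Set Topology

/-- A zero-set: the preimage of `{0}` under a continuous real-valued function. -/
def IsZeroSet {Y : Type*} [TopologicalSpace Y] (Z : Set Y) : Prop :=
  ∃ f : C(Y, ℝ), Z = f ⁻¹' {0}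

/-- A cozero-set: the complement of a zero-set. -/
def IsCozeroSet {Y : Type*} [TopologicalSpace Y] (C : Set Y) : Prop :=
  IsZeroSet Cᶜ

/-- A space is pseudocompact if every continuous real-valued function on it is bounded. -/
def IsPseudocompact (Y : Type*) [TopologicalSpace Y] : Prop :=
  ∀ f : C(Y, ℝ), ∃ M : ℝ, ∀ y, |f y| ≤ M

/-- A subset is pseudocompact if it is pseudocompact as a subspace. -/
def IsPseudocompactSet {Y : Type*} [TopologicalSpace Y] (A : Set Y) : Prop :=
  ∀ f : C(A, ℝ), ∃ M : ℝ, ∀ a, |f a| ≤ M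

/-- The Hewitt realcompactification `υX`, realized as the subspace of `βX` consisting of
those `p ∈ βX` such that every zero-set of `βX` containing `p` meets `X`. -/
def upsilonSet (X : Type*) [TopologicalSpace X] : Set (StoneCech X) :=
  {p | ∀ Z : Set (StoneCech X), IsZeroSet Z → p ∈ Z →
    (Z ∩ Set.range (stoneCechUnit : X → StoneCech X)).Nonempty}

/-- `ζX = X ∪ cl_{βX}(βX \ υX)`, as a subset of `βX`. -/
def zetaSet (X : Type*) [TopologicalSpace X] : Set (StoneCech X) :=
  Set.range (stoneCechUnit : X → StoneCech X) ∪ closure (upsilonSet X)ᶜ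

universe u

open Filter unitInterval

noncomputable section AuxiliaryLemmas

section helpers

variable {α : Type*} [TopologicalSpace α]

lemma isZeroSet_inter {S Z : Set α} (hS : IsZeroSet S) (hZ : IsZeroSet Z) :
    IsZeroSet (S ∩ Z) := by
  obtain ⟨f, rfl⟩ := hS
  obtain ⟨g, rfl⟩ := hZ
  refine ⟨⟨fun x => |f x| + |g x|, by continuity⟩, ?_⟩
  ext x
  simp only [mem_inter_iff, mem_preimage, mem_singleton_iff, ContinuousMap.coe_mk]
  constructor
  · rintro ⟨h1, h2⟩; simp [h1, h2]
  · intro h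
    have h1 : |f x| = 0 ∧ |g x| = 0 := by
      constructor <;> nlinarith [abs_nonneg (f x), abs_nonneg (g x)]
    exact ⟨abs_eq_zero.mp h1.1, abs_eq_zero.mp h1.2⟩

lemma isZeroSet_le {θ : α → ℝ} (hθ : Continuous θ) (c : ℝ) :
    IsZeroSet {x | θ x ≤ c} := by
  refine ⟨⟨fun x => max (θ x - c) 0, by continuity⟩, ?_⟩
  ext x
  simp only [mem_setOf_eq, mem_preimage, mem_singleton_iff, ContinuousMap.coe_mk]
  constructor
  · intro h; simp [max_eq_right, sub_nonpos.mpr h]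
  · intro h
    have := le_max_left (θ x - c) 0
    rw [h] at this
    linarith

lemma isZeroSet_ge {θ : α → ℝ} (hθ : Continuous θ) (c : ℝ) :
    IsZeroSet {x | c ≤ θ x} := by
  have := isZeroSet_le (hθ.neg) (-c)
  simpa [neg_le_neg_iff] using this

lemma mem_closure_inter_open {s O : Set α} {p : α} (hO : IsOpen O)
    (hp : p ∈ closure s) (hpO : p ∈ O) : p ∈ closure (s ∩ O) := by
  rw [mem_closure_iff] at hp ⊢
  intro o ho hpo
  obtain ⟨x, hx⟩ := hp (o ∩ O) (ho.inter hO) ⟨hpo, hpO⟩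
  exact ⟨x, ⟨hx.1.1, hx.2, hx.1.2⟩⟩

end helpers

section embed

variable {α : Type*} [TopologicalSpace α] [T2Space α] [CompletelyRegularSpace α]

instance : T35Space α := ⟨⟩

lemma isEmbedding_stoneCechUnit' : IsEmbedding (stoneCechUnit : α → StoneCech α) := by
  refine ⟨isInducing_iff_nhds.mpr fun x => le_antisymm ?_ ?_,
    injective_stoneCechUnit_of_t35Space⟩
  · exact (continuous_stoneCechUnit.tendsto x).le_comap
  · intro s hs
    obtain ⟨U, hUs, hU, hxU⟩ := mem_nhds_iff.mp hs
    obtain ⟨f, hf, hfx, hfU⟩ :=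
      CompletelyRegularSpace.completely_regular x Uᶜ hU.isClosed_compl (by simp [hxU])
    have hcoe : Continuous fun z : StoneCech α => ((stoneCechExtend hf z : I) : ℝ) :=
      continuous_subtype_val.comp (continuous_stoneCechExtend hf)
    refine mem_comap.mpr ⟨{z | ((stoneCechExtend hf z : I) : ℝ) < 1}, ?_, ?_⟩
    · refine IsOpen.mem_nhds (isOpen_lt hcoe continuous_const) ?_
      have : stoneCechExtend hf (stoneCechUnit x) = f x := congrFun (stoneCechExtend_extends hf) x
      simp [this, hfx]
    · intro y hy
      simp only [mem_preimage, mem_setOf_eq] at hy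
      have hext : stoneCechExtend hf (stoneCechUnit y) = f y :=
        congrFun (stoneCechExtend_extends hf) y
      rw [hext] at hy
      by_contra hyU
      have h1 : y ∈ Uᶜ := fun h => hyU (hUs h)
      rw [hfU h1] at hy
      norm_num at hy

end embed

section lf

variable {α : Type*} [TopologicalSpace α] [CompletelyRegularSpace α]

lemma exists_unbounded_of_locallyFinite (W : ℕ → Set α) (hW : ∀ n, IsOpen (W n))
    (x : ℕ → α) (hx : ∀ n, x n ∈ W n)
    (hLF : ∀ p : α, ∃ N ∈ 𝓝 p, {n | (W n ∩ N).Nonempty}.Finite) :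
    ∃ F : C(α, ℝ), (∀ y, 0 ≤ F y) ∧ ∀ n : ℕ, (n : ℝ) ≤ F (x n) := by
  have hsep : ∀ n, ∃ g : α → I, Continuous g ∧ g (x n) = 0 ∧ EqOn g 1 (W n)ᶜ := fun n =>
    CompletelyRegularSpace.completely_regular (x n) (W n)ᶜ (hW n).isClosed_compl (by simp [hx n])
  choose g hgc hgx hgW using hsep
  set f : ℕ → α → ℝ := fun n y => (n : ℝ) * (1 - ((g n y : I) : ℝ)) with hf
  have hf0 : ∀ n y, 0 ≤ f n y := by
    intro n y
    have h1 : ((g n y : I) : ℝ) ≤ 1 := (g n y).2.2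
    have h2 : (0 : ℝ) ≤ (n : ℝ) := Nat.cast_nonneg n
    have : (0:ℝ) ≤ 1 - ((g n y : I) : ℝ) := by linarith
    exact mul_nonneg h2 this
  have hfW : ∀ n, ∀ y ∈ (W n)ᶜ, f n y = 0 := by
    intro n y hy
    have : g n y = 1 := hgW n hy
    simp [hf, this]
  have hfx : ∀ n, f n (x n) = n := by intro n; simp [hf, hgx n]
  have hfc : ∀ n, Continuous (f n) := fun n =>
    continuous_const.mul (continuous_const.sub (continuous_subtype_val.comp (hgc n)))
  have hsupp : ∀ (N : Set α) (y : α), y ∈ N → ∀ n, f n y ≠ 0 → (W n ∩ N).Nonempty := by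
    intro N y hyN n hn
    have hyW : y ∈ W n := by
      by_contra h
      exact hn (hfW n y h)
    exact ⟨y, hyW, hyN⟩
  have hsummable : ∀ y : α, Summable fun n => f n y := by
    intro y
    obtain ⟨N, hN, hfin⟩ := hLF y
    exact summable_of_ne_finset_zero (s := hfin.toFinset) (fun n hn => by
      by_contra h
      exact hn (hfin.mem_toFinset.mpr (hsupp N y (mem_of_mem_nhds hN) n h)))
  set F : α → ℝ := fun y => ∑' n, f n y with hF
  have hFc : Continuous F := by
    rw [continuous_iff_continuousAt]
    intro p
    obtain ⟨N, hN, hfin⟩ := hLF p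
    have heq : ∀ y ∈ N, F y = ∑ n ∈ hfin.toFinset, f n y := by
      intro y hy
      exact tsum_eq_sum (fun n hn => by
        by_contra h
        exact hn (hfin.mem_toFinset.mpr (hsupp N y hy n h)))
    have hGc : Continuous fun y => ∑ n ∈ hfin.toFinset, f n y :=
      continuous_finset_sum _ (fun n _ => hfc n)
    exact hGc.continuousAt.congr (Filter.eventuallyEq_of_mem hN (fun y hy => (heq y hy).symm))
  refine ⟨⟨F, hFc⟩, fun y => tsum_nonneg (fun n => hf0 n y), fun n => ?_⟩
  have := Summable.le_tsum (hsummable (x n)) n (fun j _ => hf0 j (x n))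
  simpa [hF, hfx n] using this

lemma exists_mem_closure_of_pseudocompact {Y : Type*} [TopologicalSpace Y]
    [CompletelyRegularSpace Y] (hps : IsPseudocompact Y) (O : ℕ → Set Y)
    (hO : ∀ n, IsOpen (O n)) (hne : ∀ n, (O n).Nonempty)
    (hdec : ∀ m n, m ≤ n → O n ⊆ O m) : ∃ y, ∀ n, y ∈ closure (O n) := by
  by_contra hcon
  push_neg at hcon
  choose y hy using hne
  have hLF : ∀ p : Y, ∃ N ∈ 𝓝 p, {n | (O n ∩ N).Nonempty}.Finite := by
    intro p
    obtain ⟨m, hm⟩ := hcon p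
    refine ⟨(closure (O m))ᶜ, (isClosed_closure.isOpen_compl).mem_nhds hm, ?_⟩
    refine Set.Finite.subset (Set.finite_Iio m) ?_
    intro n hn
    simp only [mem_setOf_eq] at hn
    by_contra hnm
    simp only [mem_Iio, not_lt] at hnm
    obtain ⟨z, hz1, hz2⟩ := hn
    exact hz2 (subset_closure (hdec m n hnm hz1))
  obtain ⟨F, hF0, hFn⟩ := exists_unbounded_of_locallyFinite O hO y hy hLF
  obtain ⟨M, hM⟩ := hps F
  obtain ⟨n, hn⟩ := exists_nat_gt M
  have := hFn n
  have h2 := hM (y n)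
  rw [abs_of_nonneg (hF0 (y n))] at h2
  linarith

end lf

section ups

variable {X : Type*} [TopologicalSpace X]

lemma unit_mem_upsilon (x : X) : stoneCechUnit x ∈ upsilonSet X :=
  fun _Z _hZ hx => ⟨stoneCechUnit x, hx, mem_range_self x⟩

/-- closure of the image of a pseudocompact set lies in υX -/
lemma closure_subset_upsilon_of_pseudocompact {A : Set X} (hA : IsPseudocompactSet A) :
    closure (stoneCechUnit '' A) ⊆ upsilonSet X := by
  intro p hp Z hZ hpZ
  by_contra hcon
  rw [Set.not_nonempty_iff_eq_empty] at hcon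
  obtain ⟨Φ, rfl⟩ := hZ
  have hne : ∀ x : X, Φ (stoneCechUnit x) ≠ 0 := by
    intro x h
    have hmem : stoneCechUnit x ∈ (⇑Φ ⁻¹' {0}) ∩ range (stoneCechUnit : X → StoneCech X) :=
      ⟨h, mem_range_self x⟩
    rw [hcon] at hmem
    exact hmem
  rcases A.eq_empty_or_nonempty with hAe | hAne
  · rw [hAe] at hp; simp at hp
  · obtain ⟨a₀, ha₀⟩ := hAne
    have hgc : Continuous fun a : A => 1 / |Φ (stoneCechUnit (a : X))| := by
      refine continuous_const.div ?_ ?_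
      · exact (continuous_abs.comp (Φ.continuous.comp
          (continuous_stoneCechUnit.comp continuous_subtype_val)))
      · intro a
        exact abs_ne_zero.mpr (hne a)
    obtain ⟨M, hM⟩ := hA ⟨_, hgc⟩
    have habs : ∀ a : A, 1 / |Φ (stoneCechUnit (a : X))| ≤ M := by
      intro a
      refine le_trans (le_abs_self _) ?_
      exact hM a
    have hMpos : 0 < M := by
      have h1 : 0 < |Φ (stoneCechUnit a₀)| := abs_pos.mpr (hne a₀)
      have h2 : (0:ℝ) < 1 / |Φ (stoneCechUnit a₀)| := by positivity
      exact lt_of_lt_of_le h2 (habs ⟨a₀, ha₀⟩)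
    have hbound : ∀ x ∈ A, 1 / M ≤ |Φ (stoneCechUnit x)| := by
      intro x hx
      have h1 : 0 < |Φ (stoneCechUnit x)| := abs_pos.mpr (hne x)
      have h2 := habs ⟨x, hx⟩
      rw [div_le_iff₀ h1] at h2
      rw [div_le_iff₀ hMpos]
      nlinarith
    have hclosed : IsClosed {z : StoneCech X | 1 / M ≤ |Φ z|} :=
      isClosed_le continuous_const (continuous_abs.comp Φ.continuous)
    have hsub : closure (stoneCechUnit '' A) ⊆ {z : StoneCech X | 1 / M ≤ |Φ z|} := by
      refine closure_minimal ?_ hclosed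
      rintro _ ⟨x, hx, rfl⟩
      exact hbound x hx
    have hfin := hsub hp
    simp only [mem_setOf_eq] at hfin
    rw [show Φ p = 0 from hpZ] at hfin
    simp only [abs_zero] at hfin
    have : (0:ℝ) < 1 / M := by positivity
    linarith
end ups

section rel

variable {X : Type*} [TopologicalSpace X] [CompletelyRegularSpace X]

lemma isPseudocompactSet_closure_of_upsilon {C : Set X} (hC : IsOpen C)
    (hups : closure (stoneCechUnit '' C) ⊆ upsilonSet X) :
    IsPseudocompactSet (closure C) := by
  intro g
  by_contra hcon
  push_neg at hcon
  -- produce points of C on which |g| is large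
  have hpts : ∀ n : ℕ, ∃ x, ∃ hx : x ∈ C, (n : ℝ) ≤ |g ⟨x, subset_closure hx⟩| := by
    intro n
    obtain ⟨z, hz⟩ := hcon n
    set V₀ : Set (closure C) := {w | (n : ℝ) < |g w|} with hV₀
    have hV₀open : IsOpen V₀ :=
      isOpen_lt continuous_const ((map_continuous g).abs)
    obtain ⟨V, hVopen, hVeq⟩ := isOpen_induced_iff.mp hV₀open
    have hzV : (z : X) ∈ V := by
      have : z ∈ V₀ := hz
      rw [← hVeq] at this
      exact this
    have hzc : (z : X) ∈ closure C := z.2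
    rw [mem_closure_iff] at hzc
    obtain ⟨x, hxV, hxC⟩ := hzc V hVopen hzV
    refine ⟨x, hxC, ?_⟩
    have : (⟨x, subset_closure hxC⟩ : closure C) ∈ V₀ := by
      rw [← hVeq]
      exact hxV
    exact le_of_lt this
  choose ξ hξC hξg using hpts
  set η : ℕ → closure C := fun n => ⟨ξ n, subset_closure (hξC n)⟩ with hη
  -- the open sets Wn
  have hUn : ∀ n : ℕ, ∃ V : Set X, IsOpen V ∧
      (Subtype.val ⁻¹' V : Set (closure C)) = {w | |g w - g (η n)| < 1} := by
    intro n
    have hopen : IsOpen {w : closure C | |g w - g (η n)| < 1} :=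
      isOpen_lt ((map_continuous g).sub continuous_const).abs continuous_const
    obtain ⟨V, hVopen, hVeq⟩ := isOpen_induced_iff.mp hopen
    exact ⟨V, hVopen, hVeq⟩
  choose Vn hVnopen hVneq using hUn
  set W : ℕ → Set X := fun n => C ∩ Vn n with hW
  have hWopen : ∀ n, IsOpen (W n) := fun n => hC.inter (hVnopen n)
  have hξW : ∀ n, ξ n ∈ W n := by
    intro n
    refine ⟨hξC n, ?_⟩
    have : η n ∈ {w : closure C | |g w - g (η n)| < 1} := by
      simp [sub_self]
    rw [← hVneq n] at this
    exact this
  have hLF : ∀ p : X, ∃ N ∈ 𝓝 p, {n | (W n ∩ N).Nonempty}.Finite := by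
    intro p
    by_cases hp : p ∈ closure C
    · have hopen : IsOpen {w : closure C | |g w - g ⟨p, hp⟩| < 1} :=
        isOpen_lt ((map_continuous g).sub continuous_const).abs continuous_const
      obtain ⟨V', hV'open, hV'eq⟩ := isOpen_induced_iff.mp hopen
      have hpV' : p ∈ V' := by
        have : (⟨p, hp⟩ : closure C) ∈ {w : closure C | |g w - g ⟨p, hp⟩| < 1} := by
          simp [sub_self]
        rw [← hV'eq] at this
        exact this
      refine ⟨V', hV'open.mem_nhds hpV', ?_⟩
      refine Set.Finite.subset (Set.finite_Iic ⌈|g ⟨p, hp⟩| + 2⌉₊) ?_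
      intro n hn
      obtain ⟨x, ⟨hxC, hxVn⟩, hxV'⟩ := hn
      set w : closure C := ⟨x, subset_closure hxC⟩ with hwdef
      have h1 : |g w - g (η n)| < 1 := by
        have : w ∈ Subtype.val ⁻¹' (Vn n) := hxVn
        rw [hVneq n] at this
        exact this
      have h2 : |g w - g ⟨p, hp⟩| < 1 := by
        have : w ∈ Subtype.val ⁻¹' V' := hxV'
        rw [hV'eq] at this
        exact this
      have h3 : (n : ℝ) ≤ |g ⟨p, hp⟩| + 2 := by
        have := hξg n
        have habs : |g (η n)| ≤ |g ⟨p, hp⟩| + 2 := by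
          have := abs_sub_abs_le_abs_sub (g (η n)) (g w)
          have h5 := abs_sub_abs_le_abs_sub (g w) (g ⟨p, hp⟩)
          rw [abs_sub_comm] at h1
          linarith
        linarith
      simp only [mem_Iic]
      exact_mod_cast le_trans h3 (Nat.le_ceil _)
    · refine ⟨(closure C)ᶜ, (isClosed_closure.isOpen_compl).mem_nhds hp, ?_⟩
      refine Set.Finite.subset (Set.finite_empty) ?_
      intro n hn
      obtain ⟨x, ⟨hxC, _⟩, hxN⟩ := hn
      exact absurd (subset_closure hxC) hxN
  obtain ⟨F, hF0, hFn⟩ := exists_unbounded_of_locallyFinite W hWopen ξ hξW hLF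
  -- build the function 1/(1+F) and extend
  have hden : ∀ x : X, (0:ℝ) < 1 + F x := fun x => by linarith [hF0 x]
  have hmem : ∀ x : X, 1 / (1 + F x) ∈ I := by
    intro x
    constructor
    · exact div_nonneg zero_le_one (le_of_lt (hden x))
    · rw [div_le_one (hden x)]
      linarith [hF0 x]
  set hI : X → I := fun x => ⟨1 / (1 + F x), hmem x⟩ with hIdef
  have hIc : Continuous hI := by
    refine Continuous.subtype_mk ?_ _
    exact continuous_const.div (continuous_const.add (map_continuous F)) (fun x => (hden x).ne')
  set H := stoneCechExtend hIc with hH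
  set coeH : StoneCech X → ℝ := fun z => (H z : ℝ) with hcoeH
  have hcoeHc : Continuous coeH := continuous_subtype_val.comp (continuous_stoneCechExtend hIc)
  have hHunit : ∀ x : X, coeH (stoneCechUnit x) = 1 / (1 + F x) := by
    intro x
    have : H (stoneCechUnit x) = hI x := congrFun (stoneCechExtend_extends hIc) x
    rw [hcoeH]
    simp only [this, hIdef]
  -- minimum over the compact closure
  have hcpt : IsCompact (closure (stoneCechUnit '' C)) := isClosed_closure.isCompact
  have hne : (closure (stoneCechUnit '' C)).Nonempty :=
    ⟨stoneCechUnit (ξ 0), subset_closure (mem_image_of_mem _ (hξC 0))⟩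
  obtain ⟨p, hpmem, hpmin⟩ := hcpt.exists_isMinOn hne hcoeHc.continuousOn
  have hp0 : coeH p = 0 := by
    refine le_antisymm ?_ (H p).2.1
    by_contra hpos
    push_neg at hpos
    obtain ⟨n, hn⟩ := exists_nat_gt (1 / coeH p)
    have hle : coeH p ≤ 1 / (1 + F (ξ n)) := by
      have hmin := hpmin (subset_closure (mem_image_of_mem _ (hξC n)))
      simp only [mem_setOf_eq] at hmin
      rwa [hHunit (ξ n)] at hmin
    have h1 : (n : ℝ) ≤ F (ξ n) := hFn n
    have h2 : 1 / (1 + F (ξ n)) ≤ 1 / (1 + (n:ℝ)) := by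
      apply one_div_le_one_div_of_le
      · positivity
      · linarith
    have h3 : coeH p ≤ 1 / (1 + (n:ℝ)) := le_trans hle h2
    rw [div_lt_iff₀ hpos] at hn
    have h4 : coeH p * (1 + (n:ℝ)) ≤ 1 := (le_div_iff₀ (by positivity)).mp h3
    nlinarith
  have hpu : p ∈ upsilonSet X := hups hpmem
  obtain ⟨q, hqZ, hqr⟩ := hpu (coeH ⁻¹' {0}) ⟨⟨coeH, hcoeHc⟩, rfl⟩ hp0
  obtain ⟨x, rfl⟩ := hqr
  have : coeH (stoneCechUnit x) = 0 := hqZ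
  rw [hHunit x] at this
  have : (0:ℝ) < 1 / (1 + F x) := div_pos zero_lt_one (hden x)
  simp_all

end rel

section lemA

variable {X : Type*} [TopologicalSpace X] [T2Space X] [CompletelyRegularSpace X]

lemma closure_inter_closure_subset {S Z : Set X} (hS : IsZeroSet S) (hZ : IsZeroSet Z) :
    closure (stoneCechUnit '' S) ∩ closure (stoneCechUnit '' Z) ⊆
      closure (stoneCechUnit '' (S ∩ Z)) := by
  rintro p ⟨hpS, hpZ⟩
  by_contra hcon
  obtain ⟨φ, hφ0, hφ1, hφI⟩ := exists_continuous_zero_one_of_isClosed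
    (isClosed_singleton (x := p)) (isClosed_closure (s := stoneCechUnit '' (S ∩ Z)))
    (Set.disjoint_singleton_left.mpr hcon)
  have hφp : φ p = 0 := hφ0 rfl
  set θ : X → ℝ := fun x => φ (stoneCechUnit x) with hθdef
  have hθc : Continuous θ := φ.continuous.comp continuous_stoneCechUnit
  set A : Set X := S ∩ {x | θ x ≤ 1/2} with hA
  set B : Set X := Z ∩ {x | θ x ≤ 1/2} with hB
  have hAzero : IsZeroSet A := isZeroSet_inter hS (isZeroSet_le hθc _)
  have hBzero : IsZeroSet B := isZeroSet_inter hZ (isZeroSet_le hθc _)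
  have hABempty : A ∩ B = ∅ := by
    rw [Set.eq_empty_iff_forall_notMem]
    rintro x ⟨⟨hxS, hxθ⟩, ⟨hxZ, _⟩⟩
    have : φ (stoneCechUnit x) = 1 := hφ1 (subset_closure (mem_image_of_mem _ ⟨hxS, hxZ⟩))
    rw [hθdef] at hxθ
    simp only [mem_setOf_eq] at hxθ
    rw [this] at hxθ
    norm_num at hxθ
  obtain ⟨fa, hfa⟩ := hAzero
  obtain ⟨fb, hfb⟩ := hBzero
  set a : X → ℝ := fun x => |fa x| with ha
  set b : X → ℝ := fun x => |fb x| with hb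
  have hamem : ∀ x, x ∈ A ↔ a x = 0 := by
    intro x
    rw [hfa]
    simp [ha, abs_eq_zero]
  have hbmem : ∀ x, x ∈ B ↔ b x = 0 := by
    intro x
    rw [hfb]
    simp [hb, abs_eq_zero]
  have hab : ∀ x, 0 < a x + b x := by
    intro x
    rcases lt_or_eq_of_le (add_nonneg (abs_nonneg (fa x)) (abs_nonneg (fb x))) with h | h
    · exact h
    · exfalso
      have h1 : a x = 0 ∧ b x = 0 := by
        constructor <;> nlinarith [abs_nonneg (fa x), abs_nonneg (fb x)]
      have : x ∈ A ∩ B := ⟨(hamem x).mpr h1.1, (hbmem x).mpr h1.2⟩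
      rw [hABempty] at this
      exact this
  set k : X → ℝ := fun x => a x / (a x + b x) with hk
  have hkmem : ∀ x, k x ∈ I := by
    intro x
    constructor
    · exact div_nonneg (abs_nonneg _) (le_of_lt (hab x))
    · rw [div_le_one (hab x)]
      nlinarith [abs_nonneg (fb x)]
  set kI : X → I := fun x => ⟨k x, hkmem x⟩ with hkI
  have hkIc : Continuous kI := by
    refine Continuous.subtype_mk ?_ _
    exact Continuous.div (continuous_abs.comp (map_continuous fa))
      ((continuous_abs.comp (map_continuous fa)).add (continuous_abs.comp (map_continuous fb)))
      (fun x => (hab x).ne')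
  set K := stoneCechExtend hkIc with hK
  set coeK : StoneCech X → ℝ := fun z => (K z : ℝ) with hcoeK
  have hcoeKc : Continuous coeK := continuous_subtype_val.comp (continuous_stoneCechExtend hkIc)
  have hKunit : ∀ x : X, coeK (stoneCechUnit x) = k x := by
    intro x
    have : K (stoneCechUnit x) = kI x := congrFun (stoneCechExtend_extends hkIc) x
    simp only [hcoeK, this, hkI]
  -- p is in the closure of the image of A
  have hmemcl : ∀ (S' : Set X), p ∈ closure (stoneCechUnit '' S') →
      p ∈ closure (stoneCechUnit '' (S' ∩ {x | θ x ≤ 1/2})) := by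
    intro S' hpS'
    have hO : IsOpen {z : StoneCech X | φ z < 1/2} := isOpen_lt φ.continuous continuous_const
    have hpO : p ∈ {z : StoneCech X | φ z < 1/2} := by
      simp only [mem_setOf_eq, hφp]
      norm_num
    have := mem_closure_inter_open hO hpS' hpO
    refine closure_mono ?_ this
    rintro z ⟨⟨x, hxS', rfl⟩, hzO⟩
    refine mem_image_of_mem _ ⟨hxS', ?_⟩
    simp only [mem_setOf_eq] at hzO ⊢
    exact le_of_lt hzO
  have hpA : p ∈ closure (stoneCechUnit '' A) := hmemcl S hpS
  have hpB : p ∈ closure (stoneCechUnit '' B) := hmemcl Z hpZ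
  have hK0 : coeK p = 0 := by
    have hcl : IsClosed (coeK ⁻¹' {0}) := IsClosed.preimage hcoeKc isClosed_singleton
    have hsub : stoneCechUnit '' A ⊆ coeK ⁻¹' {0} := by
      rintro _ ⟨x, hxA, rfl⟩
      simp only [mem_preimage, mem_singleton_iff, hKunit x, hk]
      rw [(hamem x).mp hxA]
      simp
    exact closure_minimal hsub hcl hpA
  have hK1 : coeK p = 1 := by
    have hcl : IsClosed (coeK ⁻¹' {1}) := IsClosed.preimage hcoeKc isClosed_singleton
    have hsub : stoneCechUnit '' B ⊆ coeK ⁻¹' {1} := by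
      rintro _ ⟨x, hxB, rfl⟩
      simp only [mem_preimage, mem_singleton_iff, hKunit x, hk]
      have hbx : b x = 0 := (hbmem x).mp hxB
      have hax : 0 < a x := by
        have := hab x
        rw [hbx] at this
        simpa using this
      rw [hbx, add_zero, div_self hax.ne']
    exact closure_minimal hsub hcl hpB
  rw [hK0] at hK1
  norm_num at hK1

end lemA

section phi

variable {X Y : Type*} [TopologicalSpace X] [T2Space X] [CompletelyRegularSpace X]
  [TopologicalSpace Y] [T2Space Y] [CompletelyRegularSpace Y] {e : X → Y}

noncomputable def auxPhi (hec : Continuous e) : StoneCech X → StoneCech Y :=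
  stoneCechExtend (continuous_stoneCechUnit.comp hec)

lemma auxPhi_continuous (hec : Continuous e) : Continuous (auxPhi hec) :=
  continuous_stoneCechExtend _

lemma auxPhi_unit (hec : Continuous e) (x : X) :
    auxPhi hec (stoneCechUnit x) = stoneCechUnit (e x) :=
  congrFun (stoneCechExtend_extends _) x

lemma auxPhi_surjective (hec : Continuous e) (hd : DenseRange e) :
    Function.Surjective (auxPhi hec) := by
  have h1 : DenseRange ((stoneCechUnit : Y → StoneCech Y) ∘ e) :=
    DenseRange.comp (denseRange_stoneCechUnit (α := Y)) hd continuous_stoneCechUnit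
  have hsub : range ((stoneCechUnit : Y → StoneCech Y) ∘ e) ⊆ range (auxPhi hec) := by
    rintro _ ⟨x, rfl⟩
    exact ⟨stoneCechUnit x, auxPhi_unit hec x⟩
  have hdr : Dense (range (auxPhi hec)) := Dense.mono hsub h1
  have hclosed : IsClosed (range (auxPhi hec)) :=
    (isCompact_range (auxPhi_continuous hec)).isClosed
  intro q
  have : q ∈ closure (range (auxPhi hec)) := hdr q
  rwa [hclosed.closure_eq] at this

lemma auxPhi_fiber (he : IsEmbedding e) {p : StoneCech X} {x : X}
    (hp : auxPhi he.continuous p = stoneCechUnit (e x)) : p = stoneCechUnit x := by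
  have hpcl : p ∈ closure (range (stoneCechUnit : X → StoneCech X)) := by
    rw [denseRange_stoneCechUnit.closure_range]
    trivial
  obtain ⟨V, hV1, hV2⟩ := mem_closure_iff_ultrafilter.mp hpcl
  set U : Ultrafilter X := V.comap injective_stoneCechUnit_of_t35Space hV1 with hU
  have h1 : Tendsto (stoneCechUnit : X → StoneCech X) (U : Filter X) (𝓝 p) := by
    rw [hU, Ultrafilter.coe_comap]
    exact le_trans Filter.map_comap_le hV2
  have h2 : Tendsto (auxPhi he.continuous ∘ stoneCechUnit) (U : Filter X)
      (𝓝 (auxPhi he.continuous p)) := ((auxPhi_continuous he.continuous).tendsto p).comp h1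
  have h3 : Tendsto ((stoneCechUnit : Y → StoneCech Y) ∘ e) (U : Filter X)
      (𝓝 (stoneCechUnit (e x))) := by
    rw [← hp]
    have : auxPhi he.continuous ∘ stoneCechUnit = (stoneCechUnit : Y → StoneCech Y) ∘ e :=
      funext (auxPhi_unit he.continuous)
    rwa [this] at h2
  have h4 : Tendsto e (U : Filter X) (𝓝 (e x)) :=
    (isEmbedding_stoneCechUnit'.toIsInducing.tendsto_nhds_iff).mpr h3
  have h5 : Tendsto id (U : Filter X) (𝓝 x) := by
    refine (he.toIsInducing.tendsto_nhds_iff).mpr ?_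
    simpa [Function.comp] using h4
  have h6 : Tendsto (stoneCechUnit : X → StoneCech X) (U : Filter X) (𝓝 (stoneCechUnit x)) := by
    have := (continuous_stoneCechUnit.tendsto x).comp h5
    simpa [Function.comp] using this
  exact tendsto_nhds_unique h1 h6

/-- Claim P : every nonempty zero set of βX given by a nonnegative function meets the
preimage of (the copy of) Y, provided Y is pseudocompact with X openly embedded. -/
lemma auxPhi_zeroSet_meets (he : IsEmbedding e) (hd : DenseRange e)
    (hopen : IsOpen (range e)) (hps : IsPseudocompact Y)
    (F : C(StoneCech X, ℝ)) (hF0 : ∀ z, 0 ≤ F z) (hFne : (F ⁻¹' {0}).Nonempty) :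
    ∃ t, F t = 0 ∧ auxPhi he.continuous t ∈ range (stoneCechUnit : Y → StoneCech Y) := by
  by_contra hcon
  push_neg at hcon
  set f : X → ℝ := fun x => F (stoneCechUnit x) with hf
  have hfc : Continuous f := F.continuous.comp continuous_stoneCechUnit
  have hfpos : ∀ x, 0 < f x := by
    intro x
    rcases lt_or_eq_of_le (hF0 (stoneCechUnit x)) with h | h
    · exact h
    · exfalso
      exact (hcon (stoneCechUnit x) h.symm)
        ⟨e x, (auxPhi_unit he.continuous x).symm⟩
  obtain ⟨p₀, hp₀⟩ := hFne
  have hsmall : ∀ n : ℕ, ∃ x : X, f x < 1 / ((n : ℝ) + 1) := by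
    intro n
    have hopen' : IsOpen {z : StoneCech X | F z < 1 / ((n : ℝ) + 1)} :=
      isOpen_lt F.continuous continuous_const
    have hne' : {z : StoneCech X | F z < 1 / ((n : ℝ) + 1)}.Nonempty :=
      ⟨p₀, by simp only [mem_setOf_eq, show F p₀ = 0 from hp₀]; positivity⟩
    obtain ⟨x, hx⟩ := denseRange_stoneCechUnit.exists_mem_open hopen' hne'
    exact ⟨x, hx⟩
  set A : ℕ → Set X := fun n => {x | 1 / ((n : ℝ) + 1) ≤ f x} with hA
  set B : ℕ → Set X := fun n => {x | f x < 1 / ((n : ℝ) + 1)} with hB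
  set O : ℕ → Set Y := fun n => (closure (e '' A n))ᶜ with hO
  have heo : IsOpenEmbedding e := ⟨he, hopen⟩
  have hOopen : ∀ n, IsOpen (O n) := fun n => isClosed_closure.isOpen_compl
  have hOne : ∀ n, (O n).Nonempty := by
    intro n
    obtain ⟨x, hx⟩ := hsmall n
    refine ⟨e x, ?_⟩
    simp only [hO, mem_compl_iff]
    intro hmem
    rw [mem_closure_iff] at hmem
    obtain ⟨z, hz1, hz2⟩ := hmem (e '' B n) (heo.isOpenMap _ (isOpen_lt hfc continuous_const))
      (mem_image_of_mem _ hx)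
    obtain ⟨x₁, hx₁B, hx₁e⟩ := hz1
    obtain ⟨x₂, hx₂A, hx₂e⟩ := hz2
    have hx12 : x₁ = x₂ := he.injective (by rw [hx₁e, hx₂e])
    have hb : f x₁ < 1 / ((n : ℝ) + 1) := hx₁B
    have ha : 1 / ((n : ℝ) + 1) ≤ f x₂ := hx₂A
    rw [hx12] at hb
    linarith
  have hOdec : ∀ m n, m ≤ n → O n ⊆ O m := by
    intro m n hmn
    have hAB : A m ⊆ A n := by
      intro x hx
      have hx' : 1 / ((m : ℝ) + 1) ≤ f x := hx
      have hmn' : ((m : ℝ) + 1) ≤ (n : ℝ) + 1 := by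
        have : (m : ℝ) ≤ (n : ℝ) := Nat.cast_le.mpr hmn
        linarith
      have h2 : 1 / ((n : ℝ) + 1) ≤ 1 / ((m : ℝ) + 1) :=
        one_div_le_one_div_of_le (by positivity) hmn'
      exact le_trans h2 hx'
    exact compl_subset_compl.mpr (closure_mono (image_mono hAB))
  obtain ⟨y, hy⟩ := exists_mem_closure_of_pseudocompact hps O hOopen hOne hOdec
  -- y is not in the range of e
  have hyr : y ∉ range e := by
    rintro ⟨x, rfl⟩
    obtain ⟨n, hn⟩ := exists_nat_gt (1 / f x)
    have hfx : 1 / ((n : ℝ) + 1) < f x := by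
      have h0 : 0 < 1 / f x := div_pos one_pos (hfpos x)
      have hn0 : (0:ℝ) < n := lt_trans h0 hn
      rw [div_lt_iff₀ (hfpos x)] at hn
      rw [div_lt_iff₀ (by positivity)]
      nlinarith
    have hmem : e '' {x' | 1 / ((n : ℝ) + 1) < f x'} ∩ O n = ∅ := by
      rw [eq_empty_iff_forall_notMem]
      rintro z ⟨⟨x', hx', rfl⟩, hzO⟩
      have hx'' : 1 / ((n : ℝ) + 1) ≤ f x' := le_of_lt hx'
      exact hzO (subset_closure (mem_image_of_mem _ hx''))
    have := hy n
    rw [mem_closure_iff] at this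
    obtain ⟨z, hz1, hz2⟩ := this (e '' {x' | 1 / ((n : ℝ) + 1) < f x'})
      (heo.isOpenMap _ (isOpen_lt continuous_const hfc)) (mem_image_of_mem _ hfx)
    rw [eq_empty_iff_forall_notMem] at hmem
    exact hmem z ⟨hz1, hz2⟩
  -- closure O n ⊆ closure (e '' B n)
  have hOB : ∀ n, closure (O n) ⊆ closure (e '' B n) := by
    intro n
    refine closure_minimal ?_ isClosed_closure
    intro z hz
    have hz2 : z ∈ closure (O n ∩ range e) := by
      rw [mem_closure_iff]
      intro o ho hzo
      obtain ⟨w, hw⟩ := hd.exists_mem_open (ho.inter (hOopen n)) ⟨z, hzo, hz⟩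
      exact ⟨e w, hw.1, hw.2, mem_range_self w⟩
    refine closure_mono ?_ hz2
    rintro _ ⟨hzO, x, rfl⟩
    refine mem_image_of_mem _ ?_
    simp only [hB, mem_setOf_eq]
    by_contra hle
    exact hzO (subset_closure (mem_image_of_mem _ (not_lt.mp hle)))
  -- pull back to βX
  have hfib : ∀ n : ℕ, ((auxPhi he.continuous ⁻¹' {stoneCechUnit y}) ∩
      closure (stoneCechUnit '' B n)).Nonempty := by
    intro n
    have h1 : stoneCechUnit y ∈ closure ((stoneCechUnit : Y → StoneCech Y) '' (e '' B n)) := by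
      have := (hOB n) (hy n)
      have h2 := image_closure_subset_closure_image
        (continuous_stoneCechUnit : Continuous (stoneCechUnit : Y → StoneCech Y))
        (s := e '' B n)
      exact h2 (mem_image_of_mem _ this)
    have heq : (stoneCechUnit : Y → StoneCech Y) '' (e '' B n) =
        auxPhi he.continuous '' (stoneCechUnit '' B n) := by
      rw [← image_comp, ← image_comp]
      refine image_congr ?_
      intro x _
      exact (auxPhi_unit he.continuous x).symm
    rw [heq] at h1
    have h3 : closure (auxPhi he.continuous '' (stoneCechUnit '' B n)) ⊆
        auxPhi he.continuous '' (closure (stoneCechUnit '' B n)) := by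
      refine closure_minimal (image_mono subset_closure) ?_
      exact (isClosed_closure.isCompact.image (auxPhi_continuous he.continuous)).isClosed
    obtain ⟨w, hw1, hw2⟩ := h3 h1
    exact ⟨w, by simp [hw2], hw1⟩
  set D : ℕ → Set (StoneCech X) := fun n => (auxPhi he.continuous ⁻¹' {stoneCechUnit y}) ∩
      closure (stoneCechUnit '' B n) with hD
  have hDclosed : ∀ n, IsClosed (D n) :=
    fun n => (IsClosed.preimage (auxPhi_continuous he.continuous) isClosed_singleton).inter
      isClosed_closure
  have hDdec : ∀ n, D (n + 1) ⊆ D n := by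
    intro n
    refine inter_subset_inter_right _ (closure_mono (image_mono ?_))
    intro x hx
    simp only [hB, mem_setOf_eq] at hx ⊢
    refine lt_of_lt_of_le hx ?_
    apply one_div_le_one_div_of_le
    · positivity
    · push_cast; linarith
  obtain ⟨t, ht⟩ := IsCompact.nonempty_iInter_of_sequence_nonempty_isCompact_isClosed D
    hDdec hfib ((hDclosed 0).isCompact) hDclosed
  simp only [mem_iInter] at ht
  have htF : F t = 0 := by
    have hle : ∀ n : ℕ, F t ≤ 1 / ((n : ℝ) + 1) := by
      intro n
      have h1 : t ∈ closure (stoneCechUnit '' B n) := (ht n).2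
      have h2 : stoneCechUnit '' B n ⊆ {z | F z ≤ 1 / ((n : ℝ) + 1)} := by
        rintro _ ⟨x, hx, rfl⟩
        have hx' : f x < 1 / ((n : ℝ) + 1) := hx
        exact le_of_lt hx'
      have := closure_minimal h2 (isClosed_le F.continuous continuous_const) h1
      exact this
    refine le_antisymm ?_ (hF0 t)
    by_contra hpos
    push_neg at hpos
    obtain ⟨n, hn⟩ := exists_nat_gt (1 / F t)
    have h3 := hle n
    rw [div_lt_iff₀ hpos] at hn
    have h4 : F t * ((n:ℝ) + 1) ≤ 1 := (le_div_iff₀ (by positivity)).mp h3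
    nlinarith
  exact hcon t htF ⟨y, ((ht 0).1 : auxPhi he.continuous t = stoneCechUnit y).symm⟩

end phi

section phi2

variable {X Y : Type*} [TopologicalSpace X] [T2Space X] [CompletelyRegularSpace X]
  [TopologicalSpace Y] [T2Space Y] [CompletelyRegularSpace Y] {e : X → Y}

lemma mem_closure_unit_image {t : StoneCech X} {O : Set (StoneCech X)}
    (hO : IsOpen O) (htO : t ∈ O) {S : Set X} (hsub : ∀ x, stoneCechUnit x ∈ O → x ∈ S) :
    t ∈ closure (stoneCechUnit '' S) := by
  have hdense : t ∈ closure (range (stoneCechUnit : X → StoneCech X)) := by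
    rw [denseRange_stoneCechUnit.closure_range]; trivial
  have h1 := mem_closure_inter_open hO hdense htO
  refine closure_mono ?_ h1
  rintro z ⟨⟨x, rfl⟩, hzO⟩
  exact mem_image_of_mem _ (hsub x hzO)

lemma mem_closure_Y_of (he : IsEmbedding e) {t : StoneCech X} {y : Y} {S : Set X}
    (ht : auxPhi he.continuous t = stoneCechUnit y)
    (htS : t ∈ closure (stoneCechUnit '' S)) : y ∈ closure (e '' S) := by
  have h1 : auxPhi he.continuous t ∈
      closure (auxPhi he.continuous '' (stoneCechUnit '' S)) :=
    image_closure_subset_closure_image (auxPhi_continuous _) (mem_image_of_mem _ htS)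
  rw [ht] at h1
  have heq : auxPhi he.continuous '' (stoneCechUnit '' S) =
      (stoneCechUnit : Y → StoneCech Y) '' (e '' S) := by
    rw [← image_comp, ← image_comp]
    exact image_congr fun x _ => auxPhi_unit he.continuous x
  rw [heq] at h1
  rw [(isEmbedding_stoneCechUnit' (α := Y)).closure_eq_preimage_closure_image (e '' S)]
  exact h1

/-- The complement of υX maps into the remainder. -/
lemma compl_upsilon_subset_T (he : IsEmbedding e) (hd : DenseRange e)
    (hopen : IsOpen (range e)) (hps : IsPseudocompact Y) (hrem : IsCompact (range e)ᶜ)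
    {p : StoneCech X} (hp : p ∉ upsilonSet X) :
    auxPhi he.continuous p ∈ (stoneCechUnit : Y → StoneCech Y) '' (range e)ᶜ := by
  simp only [upsilonSet, mem_setOf_eq, not_forall] at hp
  obtain ⟨Z₀, hZ₀zero, hpZ₀, hZ₀X⟩ := hp
  rw [Set.not_nonempty_iff_eq_empty] at hZ₀X
  obtain ⟨G₀, rfl⟩ := hZ₀zero
  have hpG₀ : G₀ p = 0 := hpZ₀
  have step1 : auxPhi he.continuous p ∈ range (stoneCechUnit : Y → StoneCech Y) := by
    by_contra hq
    set B : Set (StoneCech Y) := (auxPhi he.continuous '' (⇑G₀ ⁻¹' {0})) ∩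
      ((stoneCechUnit : Y → StoneCech Y) '' (range e)ᶜ) with hB
    have hBclosed : IsClosed B := by
      refine IsClosed.inter ?_ ?_
      · exact ((IsClosed.preimage G₀.continuous isClosed_singleton).isCompact.image
          (auxPhi_continuous he.continuous)).isClosed
      · exact (hrem.image continuous_stoneCechUnit).isClosed
    have hd2 : Disjoint {auxPhi he.continuous p} B := by
      rw [Set.disjoint_singleton_left]
      rintro ⟨_, hmem⟩
      exact hq (image_subset_range _ _ hmem)
    obtain ⟨G₁, hG₁0, hG₁1, hG₁I⟩ :=
      exists_continuous_zero_one_of_isClosed isClosed_singleton hBclosed hd2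
    set W : C(StoneCech X, ℝ) :=
      ⟨fun z => |G₀ z| + |G₁ (auxPhi he.continuous z)|,
        (G₀.continuous.abs).add ((G₁.continuous.comp (auxPhi_continuous he.continuous)).abs)⟩
      with hW
    have hW0 : ∀ z, 0 ≤ W z := fun z => add_nonneg (abs_nonneg _) (abs_nonneg _)
    have hWp : W p = 0 := by
      simp only [hW, ContinuousMap.coe_mk, hpG₀, abs_zero, zero_add]
      rw [hG₁0 rfl]
      simp
    obtain ⟨t, htW, hty⟩ := auxPhi_zeroSet_meets he hd hopen hps W hW0 ⟨p, hWp⟩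
    have htG₀ : G₀ t = 0 := by
      have h1 : |G₀ t| + |G₁ (auxPhi he.continuous t)| = 0 := htW
      have := abs_nonneg (G₀ t)
      have := abs_nonneg (G₁ (auxPhi he.continuous t))
      have : |G₀ t| = 0 := by linarith
      exact abs_eq_zero.mp this
    have htG₁ : G₁ (auxPhi he.continuous t) = 0 := by
      have h1 : |G₀ t| + |G₁ (auxPhi he.continuous t)| = 0 := htW
      have := abs_nonneg (G₀ t)
      have := abs_nonneg (G₁ (auxPhi he.continuous t))
      have : |G₁ (auxPhi he.continuous t)| = 0 := by linarith
      exact abs_eq_zero.mp this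
    obtain ⟨y, hyv⟩ := hty
    by_cases hyr : y ∈ range e
    · obtain ⟨x, rfl⟩ := hyr
      have : t = stoneCechUnit x := auxPhi_fiber he hyv.symm
      have hmem : stoneCechUnit x ∈ (⇑G₀ ⁻¹' {0}) ∩ range (stoneCechUnit : X → StoneCech X) :=
        ⟨by rw [← this]; exact htG₀, mem_range_self x⟩
      rw [hZ₀X] at hmem
      exact hmem
    · have hmemB : auxPhi he.continuous t ∈ B :=
        ⟨mem_image_of_mem _ htG₀, ⟨y, hyr, hyv⟩⟩
      have := hG₁1 hmemB
      rw [htG₁] at this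
      norm_num at this
  obtain ⟨y, hyv⟩ := step1
  by_cases hyr : y ∈ range e
  · obtain ⟨x, rfl⟩ := hyr
    have : p = stoneCechUnit x := auxPhi_fiber he hyv.symm
    have hmem : p ∈ (⇑G₀ ⁻¹' {0}) ∩ range (stoneCechUnit : X → StoneCech X) :=
      ⟨hpG₀, this ▸ mem_range_self x⟩
    rw [hZ₀X] at hmem
    exact hmem.elim
  · exact ⟨y, hyr, hyv⟩

end phi2

section phi3

variable {X Y : Type*} [TopologicalSpace X] [T2Space X] [CompletelyRegularSpace X]
  [TopologicalSpace Y] [T2Space Y] [CompletelyRegularSpace Y] {e : X → Y}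

/-- If the trace condition holds, points of the remainder come from cl((υX)ᶜ). -/
lemma remainder_subset_closure_compl_upsilon (he : IsEmbedding e)
    (htrace : ∀ S Z : Set X, IsZeroSet S → IsZeroSet Z →
      (∃ C : Set X, IsCozeroSet C ∧ IsPseudocompactSet (closure C) ∧ S ∩ Z ⊆ C) →
      closure (e '' S) ∩ closure (e '' Z) ⊆ Set.range e)
    {t : StoneCech X} {y : Y} (hy : y ∉ range e)
    (ht : auxPhi he.continuous t = stoneCechUnit y) :
    t ∈ closure (upsilonSet X)ᶜ := by
  by_contra hcl
  set O : Set (StoneCech X) := (closure (upsilonSet X)ᶜ)ᶜ with hOdef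
  have hOopen : IsOpen O := isClosed_closure.isOpen_compl
  have htO : t ∈ O := hcl
  have hOups : O ⊆ upsilonSet X := by
    intro z hz
    by_contra h
    exact hz (subset_closure h)
  have hOcc : IsClosed Oᶜ := by
    rw [hOdef, compl_compl]
    exact isClosed_closure
  obtain ⟨f₂, hf₂0, hf₂1, hf₂I⟩ := exists_continuous_zero_one_of_isClosed
    (isClosed_singleton (x := t)) hOcc
    (Set.disjoint_singleton_left.mpr (notMem_compl_iff.mpr htO))
  set Θ : C(StoneCech X, ℝ) := ⟨fun z => 1 - f₂ z, continuous_const.sub f₂.continuous⟩ with hΘ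
  have hΘt : Θ t = 1 := by simp [hΘ, hf₂0 rfl]
  have hΘO : ∀ z ∉ O, Θ z = 0 := by
    intro z hz
    simp [hΘ, hf₂1 (by simpa using hz : z ∈ Oᶜ)]
  set θ : X → ℝ := fun x => Θ (stoneCechUnit x) with hθ
  have hθc : Continuous θ := Θ.continuous.comp continuous_stoneCechUnit
  set S : Set X := {x | 1/2 ≤ θ x} with hS
  set C : Set X := {x | 1/3 < θ x} with hC
  have hSzero : IsZeroSet S := isZeroSet_ge hθc _
  have hCcoz : IsCozeroSet C := by
    show IsZeroSet Cᶜ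
    have hceq : Cᶜ = {x | θ x ≤ 1/3} := by
      ext x; simp [hC, not_lt]
    rw [hceq]
    exact isZeroSet_le hθc _
  have hCopen : IsOpen C := isOpen_lt continuous_const hθc
  have hCups : closure (stoneCechUnit '' C) ⊆ upsilonSet X := by
    have h1 : stoneCechUnit '' C ⊆ {z | 1/3 ≤ Θ z} := by
      rintro _ ⟨x, hx, rfl⟩
      have hx' : (1:ℝ)/3 < θ x := hx
      exact le_of_lt hx'
    have h2 : closure (stoneCechUnit '' C) ⊆ {z | 1/3 ≤ Θ z} :=
      closure_minimal h1 (isClosed_le continuous_const Θ.continuous)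
    refine fun z hz => hOups ?_
    by_contra hzO
    have hz0 := hΘO z hzO
    have h3 : (1:ℝ)/3 ≤ Θ z := h2 hz
    rw [hz0] at h3
    norm_num at h3
  have hCpc : IsPseudocompactSet (closure C) := isPseudocompactSet_closure_of_upsilon hCopen hCups
  have htr := htrace S S hSzero hSzero ⟨C, hCcoz, hCpc, by
    rintro x ⟨hx, -⟩
    have : (1:ℝ)/2 ≤ θ x := hx
    show (1:ℝ)/3 < θ x
    linarith⟩
  have htS : t ∈ closure (stoneCechUnit '' S) := by
    refine mem_closure_unit_image (O := {z | (1:ℝ)/2 < Θ z})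
      (isOpen_lt continuous_const Θ.continuous) ?_ ?_
    · show (1:ℝ)/2 < Θ t
      rw [hΘt]; norm_num
    · intro x hx
      have hx' : (1:ℝ)/2 < θ x := hx
      exact le_of_lt hx'
  have hyS : y ∈ closure (e '' S) := mem_closure_Y_of he ht htS
  exact hy (htr ⟨hyS, hyS⟩)

/-- If the trace condition holds, the map is injective over the remainder. -/
lemma trace_injective_on_remainder (he : IsEmbedding e)
    (htrace : ∀ S Z : Set X, IsZeroSet S → IsZeroSet Z →
      (∃ C : Set X, IsCozeroSet C ∧ IsPseudocompactSet (closure C) ∧ S ∩ Z ⊆ C) →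
      closure (e '' S) ∩ closure (e '' Z) ⊆ Set.range e)
    {t₁ t₂ : StoneCech X} {y : Y} (hy : y ∉ range e)
    (h₁ : auxPhi he.continuous t₁ = stoneCechUnit y)
    (h₂ : auxPhi he.continuous t₂ = stoneCechUnit y) : t₁ = t₂ := by
  by_contra hne
  obtain ⟨f₃, hf₃0, hf₃1, hf₃I⟩ := exists_continuous_zero_one_of_isClosed
    (isClosed_singleton (x := t₁)) (isClosed_singleton (x := t₂))
    (by simpa [Set.disjoint_singleton] using hne)
  set θ : X → ℝ := fun x => f₃ (stoneCechUnit x) with hθ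
  have hθc : Continuous θ := f₃.continuous.comp continuous_stoneCechUnit
  set S : Set X := {x | θ x ≤ 1/3} with hS
  set Z : Set X := {x | 2/3 ≤ θ x} with hZ
  have hCempty : IsCozeroSet (∅ : Set X) := by
    show IsZeroSet (∅ᶜ : Set X)
    rw [compl_empty]
    exact ⟨0, by ext x; simp⟩
  have hCpc : IsPseudocompactSet (closure (∅ : Set X)) := by
    intro f
    exact ⟨0, fun a => absurd a.2 (by simp [closure_empty])⟩
  have htr := htrace S Z (isZeroSet_le hθc _) (isZeroSet_ge hθc _) ⟨∅, hCempty, hCpc, by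
    rintro x ⟨hx1, hx2⟩
    have ha : θ x ≤ 1/3 := hx1
    have hb : (2:ℝ)/3 ≤ θ x := hx2
    exfalso; linarith⟩
  have hyS : y ∈ closure (e '' S) := by
    refine mem_closure_Y_of he h₁ ?_
    refine mem_closure_unit_image (O := {z | f₃ z < (1:ℝ)/3})
      (isOpen_lt f₃.continuous continuous_const) ?_ ?_
    · show f₃ t₁ < 1/3
      rw [hf₃0 rfl]; norm_num
    · intro x hx
      have hx' : θ x < 1/3 := hx
      exact le_of_lt hx'
  have hyZ : y ∈ closure (e '' Z) := by
    refine mem_closure_Y_of he h₂ ?_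
    refine mem_closure_unit_image (O := {z | (2:ℝ)/3 < f₃ z})
      (isOpen_lt continuous_const f₃.continuous) ?_ ?_
    · show (2:ℝ)/3 < f₃ t₂
      rw [hf₃1 rfl]; norm_num
    · intro x hx
      have hx' : (2:ℝ)/3 < θ x := hx
      exact le_of_lt hx'
  exact hy (htr ⟨hyS, hyZ⟩)

end phi3

end AuxiliaryLemmas

/-- Let `X` be a locally pseudocompact Tychonoff space. Then `ζX` is the unique (up to
equivalence of extensions) pseudocompactification `Y` of `X` with compact remainder satisfying:
`cl_Y S ∩ cl_Y Z ⊆ X` for every pair of zero-sets `S`, `Z` of `X` such that `S ∩ Z` is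
contained in a cozero-set of `X` with pseudocompact closure. Formally: a pseudocompactification
`Y` of `X` (via the dense embedding `e`) with compact remainder satisfies this condition iff it
is equivalent to `ζX`, i.e. there is a homeomorphism of `Y` onto `ζX` fixing `X` pointwise. -/
theorem zetaSet_unique_pseudocompactification (X : Type u) [TopologicalSpace X] [T2Space X]
    [CompletelyRegularSpace X]
    (hlp : ∀ x : X, ∃ U : Set X, IsOpen U ∧ x ∈ U ∧ IsPseudocompactSet (closure U))
    (Y : Type u) [TopologicalSpace Y] [T2Space Y] [CompletelyRegularSpace Y]
    (e : X → Y) (he : IsEmbedding e) (hd : DenseRange e)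
    (hps : IsPseudocompact Y) (hrem : IsCompact (Set.range e)ᶜ) :
    (∀ S Z : Set X, IsZeroSet S → IsZeroSet Z →
        (∃ C : Set X, IsCozeroSet C ∧ IsPseudocompactSet (closure C) ∧ S ∩ Z ⊆ C) →
        closure (e '' S) ∩ closure (e '' Z) ⊆ Set.range e) ↔
    ∃ h : Y ≃ₜ zetaSet X, ∀ x : X, (h (e x) : StoneCech X) = stoneCechUnit x := by
  constructor
  · -- forward direction: the trace condition forces Y ≅ ζX
    intro htrace
    have hopen : IsOpen (range e) := isClosed_compl_iff.mp hrem.isClosed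
    have hEzeta : ∀ p : StoneCech X,
        auxPhi he.continuous p ∈ range (stoneCechUnit : Y → StoneCech Y) ↔ p ∈ zetaSet X := by
      intro p
      constructor
      · rintro ⟨y, hy⟩
        by_cases hyr : y ∈ range e
        · obtain ⟨x, rfl⟩ := hyr
          exact Or.inl ⟨x, (auxPhi_fiber he hy.symm).symm⟩
        · exact Or.inr (remainder_subset_closure_compl_upsilon he htrace hyr hy.symm)
      · rintro (⟨x, rfl⟩ | hp)
        · exact ⟨e x, (auxPhi_unit he.continuous x).symm⟩
        · have hTclosed : IsClosed (auxPhi he.continuous ⁻¹'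
              ((stoneCechUnit : Y → StoneCech Y) '' (range e)ᶜ)) :=
            IsClosed.preimage (auxPhi_continuous he.continuous)
              ((hrem.image continuous_stoneCechUnit).isClosed)
          have hsub : (upsilonSet X)ᶜ ⊆ auxPhi he.continuous ⁻¹'
              ((stoneCechUnit : Y → StoneCech Y) '' (range e)ᶜ) :=
            fun q hq => compl_upsilon_subset_T he hd hopen hps hrem hq
          have hmem := closure_minimal hsub hTclosed hp
          exact image_subset_range _ _ hmem
    set ΦZ : zetaSet X → range (stoneCechUnit : Y → StoneCech Y) :=
      fun p => ⟨auxPhi he.continuous p.1, (hEzeta p.1).mpr p.2⟩ with hΦZ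
    have hΦZc : Continuous ΦZ :=
      Continuous.subtype_mk ((auxPhi_continuous he.continuous).comp continuous_subtype_val) _
    have hinj : Function.Injective ΦZ := by
      rintro ⟨p₁, hp₁⟩ ⟨p₂, hp₂⟩ hpq
      have h' : auxPhi he.continuous p₁ = auxPhi he.continuous p₂ := congrArg Subtype.val hpq
      obtain ⟨y, hy⟩ : auxPhi he.continuous p₁ ∈ range (stoneCechUnit : Y → StoneCech Y) :=
        (hEzeta p₁).mpr hp₁
      by_cases hyr : y ∈ range e
      · obtain ⟨x, rfl⟩ := hyr
        have e1 : p₁ = stoneCechUnit x := auxPhi_fiber he hy.symm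
        have e2 : p₂ = stoneCechUnit x := auxPhi_fiber he (by rw [← h']; exact hy.symm)
        exact Subtype.ext (e1.trans e2.symm)
      · exact Subtype.ext (trace_injective_on_remainder he htrace hyr hy.symm
          (by rw [← h']; exact hy.symm))
    have hsurj : Function.Surjective ΦZ := by
      rintro ⟨q, hq⟩
      obtain ⟨p, hp⟩ := auxPhi_surjective he.continuous hd q
      have hpz : p ∈ zetaSet X := (hEzeta p).mp (by rw [hp]; exact hq)
      exact ⟨⟨p, hpz⟩, Subtype.ext hp⟩
    have hclosedmap : IsClosedMap ΦZ := by
      intro A hA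
      set B := closure (Subtype.val '' A) with hBdef
      have hAB : Subtype.val '' A = B ∩ zetaSet X := by
        apply Subset.antisymm
        · exact subset_inter subset_closure (by rintro _ ⟨a, _, rfl⟩; exact a.2)
        · obtain ⟨A', hA'closed, hA'eq⟩ := isClosed_induced_iff.mp hA
          rintro z ⟨hzB, hzZ⟩
          have h1 : Subtype.val '' A ⊆ A' := by
            rintro _ ⟨a, ha, rfl⟩
            rw [← hA'eq] at ha
            exact ha
          have h2 : z ∈ A' := closure_minimal h1 hA'closed hzB
          exact ⟨⟨z, hzZ⟩, by rw [← hA'eq]; exact h2, rfl⟩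
      have hBcpt : IsCompact B := isClosed_closure.isCompact
      have hPhiB : IsClosed (auxPhi he.continuous '' B) :=
        (hBcpt.image (auxPhi_continuous he.continuous)).isClosed
      have himg : ΦZ '' A = Subtype.val ⁻¹' (auxPhi he.continuous '' B) := by
        ext z
        constructor
        · rintro ⟨a, haA, rfl⟩
          have haB : (a : StoneCech X) ∈ B := subset_closure (mem_image_of_mem _ haA)
          exact mem_image_of_mem _ haB
        · intro hz
          obtain ⟨b, hbB, hbq⟩ := hz
          have hbrange : auxPhi he.continuous b ∈ range (stoneCechUnit : Y → StoneCech Y) := by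
            rw [hbq]; exact z.2
          have hbz : b ∈ zetaSet X := (hEzeta b).mp hbrange
          have hbA : (⟨b, hbz⟩ : zetaSet X) ∈ A := by
            have hmem : (b : StoneCech X) ∈ Subtype.val '' A := by
              rw [hAB]
              exact ⟨hbB, hbz⟩
            obtain ⟨a, haA, hav⟩ := hmem
            have : a = ⟨b, hbz⟩ := Subtype.ext hav
            rwa [this] at haA
          exact ⟨⟨b, hbz⟩, hbA, Subtype.ext hbq⟩
      rw [himg]
      exact hPhiB.preimage continuous_subtype_val
    have hopenmap : IsOpenMap ΦZ := by
      intro U hU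
      have himg : ΦZ '' U = (ΦZ '' Uᶜ)ᶜ := by
        apply Subset.antisymm
        · rintro _ ⟨a, ha, rfl⟩
          intro hmem
          obtain ⟨b, hb, hba⟩ := hmem
          refine hb ?_
          rw [hinj hba]
          exact ha
        · intro z hz
          obtain ⟨a, rfl⟩ := hsurj z
          by_cases haU : a ∈ U
          · exact mem_image_of_mem _ haU
          · have hmem2 : ΦZ a ∈ ΦZ '' Uᶜ := mem_image_of_mem ΦZ (by simpa using haU)
            exact absurd hmem2 hz
      rw [himg]
      exact (hclosedmap _ hU.isClosed_compl).isOpen_compl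
    have hx2 : ∀ x : X,
        ((Equiv.ofBijective ΦZ ⟨hinj, hsurj⟩).toHomeomorphOfContinuousOpen
          hΦZc hopenmap) ⟨stoneCechUnit x, Set.mem_union_left _ (mem_range_self x)⟩ =
        ((isEmbedding_stoneCechUnit' (α := Y)).toHomeomorph) (e x) := by
      intro x
      apply Subtype.ext
      show auxPhi he.continuous (stoneCechUnit x) = _
      rw [auxPhi_unit he.continuous x]
      simp [IsEmbedding.toHomeomorph]
    refine ⟨((isEmbedding_stoneCechUnit' (α := Y)).toHomeomorph).trans
      ((Equiv.ofBijective ΦZ ⟨hinj, hsurj⟩).toHomeomorphOfContinuousOpen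
        hΦZc hopenmap).symm, ?_⟩
    intro x
    rw [Homeomorph.trans_apply, ← hx2 x, Homeomorph.symm_apply_apply]
  · -- backward direction
    rintro ⟨h, hh⟩ S Z hS hZ ⟨C, hCcoz, hCpc, hSZC⟩ p ⟨hpS, hpZ⟩
    by_contra hpre
    have hmap : ∀ S' : Set X, p ∈ closure (e '' S') →
        (h p : StoneCech X) ∈ closure (stoneCechUnit '' S') := by
      intro S' hp'
      have h1 : h p ∈ closure (⇑h '' (e '' S')) := by
        rw [← Homeomorph.image_closure]
        exact mem_image_of_mem _ hp'
      have h2 : (h p : StoneCech X) ∈ closure (Subtype.val '' (⇑h '' (e '' S'))) :=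
        image_closure_subset_closure_image continuous_subtype_val (mem_image_of_mem _ h1)
      have heq : Subtype.val '' (⇑h '' (e '' S')) = stoneCechUnit '' S' := by
        rw [← image_comp, ← image_comp]
        exact image_congr fun x _ => hh x
      rwa [heq] at h2
    have hqS := hmap S hpS
    have hqZ := hmap Z hpZ
    rcases (h p).2 with hqu | hqc
    · obtain ⟨x, hx⟩ := hqu
      apply hpre
      refine ⟨x, ?_⟩
      have hcoe : h (e x) = h p := Subtype.ext (by rw [hh x, hx])
      exact h.injective hcoe
    · have hW : IsZeroSet (S ∩ Z) := isZeroSet_inter hS hZ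
      have hq1 : (h p : StoneCech X) ∈ closure (stoneCechUnit '' (S ∩ Z)) :=
        closure_inter_closure_subset hS hZ ⟨hqS, hqZ⟩
      have hq2 : (h p : StoneCech X) ∉ closure (stoneCechUnit '' Cᶜ) := by
        intro hmem
        have h3 := closure_inter_closure_subset hW hCcoz ⟨hq1, hmem⟩
        have hempty : (S ∩ Z) ∩ Cᶜ = ∅ := by
          rw [eq_empty_iff_forall_notMem]
          rintro x ⟨hx1, hx2⟩
          exact hx2 (hSZC hx1)
        rw [hempty, image_empty, closure_empty] at h3
        exact h3
      have hcover : closure (stoneCechUnit '' C) ∪ closure (stoneCechUnit '' Cᶜ) =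
          (univ : Set (StoneCech X)) := by
        rw [← closure_union, ← image_union, union_compl_self, image_univ,
          denseRange_stoneCechUnit.closure_range]
      have hDopen : IsOpen (closure (stoneCechUnit '' Cᶜ))ᶜ := isClosed_closure.isOpen_compl
      have hsubups : (closure (stoneCechUnit '' Cᶜ))ᶜ ⊆ upsilonSet X := by
        intro z hz
        have hzC : z ∈ closure (stoneCechUnit '' C) := by
          have hzin : z ∈ closure (stoneCechUnit '' C) ∪ closure (stoneCechUnit '' Cᶜ) := by
            rw [hcover]; trivial
          rcases hzin with hzin | hzin
          · exact hzin
          · exact absurd hzin hz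
        have hmono : closure (stoneCechUnit '' C) ⊆ closure (stoneCechUnit '' closure C) :=
          closure_mono (image_mono subset_closure)
        exact closure_subset_upsilon_of_pseudocompact hCpc (hmono hzC)
      rw [mem_closure_iff] at hqc
      obtain ⟨z, hz1, hz2⟩ := hqc _ hDopen hq2
      exact hz2 (hsubups hz1)
end

section
/- (Comfort) A Tychonoff space X is locally pseudocompact if and only if X ⊆ int_{βX} υX. -/
open Set Topology

section Aux

open Filter

variable {X : Type*} [TopologicalSpace X] [T2Space X] [CompletelyRegularSpace X]

/-- The trace of `U` on the subspace `closure U` is dense there. -/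
lemma aux_dense_val {Y : Type*} [TopologicalSpace Y] (U : Set Y) :
    Dense ((Subtype.val : ↥(closure U) → Y) ⁻¹' U) := by
  intro y
  rw [mem_closure_iff]
  intro V hV hyV
  obtain ⟨W, hW, rfl⟩ := isOpen_induced_iff.mp hV
  obtain ⟨u, huW, huU⟩ := mem_closure_iff.mp y.2 W hW hyV
  exact ⟨⟨u, subset_closure huU⟩, huW, huU⟩

/-- An open set of `X` is the trace on `X` of an open set of `βX` (one-point version). -/
lemma aux_exists_open {U : Set X} (hU : IsOpen U) {x : X} (hx : x ∈ U) :
    ∃ O : Set (StoneCech X), IsOpen O ∧ stoneCechUnit x ∈ O ∧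
      ∀ z : X, stoneCechUnit z ∈ O → z ∈ U := by
  obtain ⟨f, hf, hfx, hfK⟩ :=
    CompletelyRegularSpace.completely_regular x Uᶜ hU.isClosed_compl (by simpa)
  refine ⟨(fun q => ((stoneCechExtend (β := unitInterval) hf q : ℝ))) ⁻¹' Iio 1, ?_, ?_, ?_⟩
  · exact IsOpen.preimage
      (continuous_subtype_val.comp (continuous_stoneCechExtend hf)) isOpen_Iio
  · have h1 : stoneCechExtend (β := unitInterval) hf (stoneCechUnit x) = f x :=
      congrFun (stoneCechExtend_extends hf) x
    simp [mem_preimage, h1, hfx]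
  · intro z hz
    by_contra hzU
    have h1 : stoneCechExtend (β := unitInterval) hf (stoneCechUnit z) = f z :=
      congrFun (stoneCechExtend_extends hf) z
    have h2 : f z = 1 := hfK hzU
    rw [mem_preimage, mem_Iio, h1, h2] at hz
    norm_num at hz

/-- Forward key lemma: if `closure U` is pseudocompact then `cl_{βX}(U) ⊆ υX`. -/
lemma aux_closure_subset_upsilon {U : Set X} (hU : IsPseudocompactSet (closure U)) :
    closure (stoneCechUnit '' U : Set (StoneCech X)) ⊆ upsilonSet X := by
  intro p hp Z hZ hpZ
  by_contra hne
  rw [Set.not_nonempty_iff_eq_empty, Set.eq_empty_iff_forall_notMem] at hne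
  obtain ⟨g, rfl⟩ := hZ
  have hgX : ∀ z : X, g (stoneCechUnit z) ≠ 0 := by
    intro z h
    exact hne (stoneCechUnit z) ⟨by simpa using h, z, rfl⟩
  have hcont : Continuous fun y : ↥(closure U) => (|g (stoneCechUnit (y : X))|)⁻¹ := by
    apply Continuous.inv₀
    · exact (g.continuous.comp (continuous_stoneCechUnit.comp continuous_subtype_val)).abs
    · intro y; exact abs_ne_zero.mpr (hgX y)
  obtain ⟨M, hM⟩ := hU ⟨_, hcont⟩
  have hUne : U.Nonempty := by
    have h1 : (stoneCechUnit '' U : Set (StoneCech X)).Nonempty :=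
      closure_nonempty_iff.mp ⟨p, hp⟩
    exact h1.of_image
  obtain ⟨u, hu⟩ := hUne
  have hMpos : 0 < M := by
    have h1 := hM ⟨u, subset_closure hu⟩
    have h2 : 0 < (|g (stoneCechUnit u)|)⁻¹ := inv_pos.mpr (abs_pos.mpr (hgX u))
    calc (0:ℝ) < (|g (stoneCechUnit u)|)⁻¹ := h2
      _ ≤ |(|g (stoneCechUnit u)|)⁻¹| := le_abs_self _
      _ ≤ M := h1
  have key : ∀ y (hy : y ∈ closure U), M⁻¹ ≤ |g (stoneCechUnit y)| := by
    intro y hy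
    have h1 : (|g (stoneCechUnit y)|)⁻¹ ≤ M :=
      le_trans (le_abs_self _) (hM ⟨y, hy⟩)
    rw [inv_le_comm₀ hMpos (abs_pos.mpr (hgX y))]
    exact h1
  have hclosed : IsClosed {q : StoneCech X | M⁻¹ ≤ |g q|} :=
    isClosed_le continuous_const g.continuous.abs
  have hsub : closure (stoneCechUnit '' U : Set (StoneCech X)) ⊆ {q | M⁻¹ ≤ |g q|} := by
    apply hclosed.closure_subset_iff.mpr
    rintro q ⟨z, hz, rfl⟩
    exact key z (subset_closure hz)
  have h3 : M⁻¹ ≤ |g p| := hsub hp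
  have hgp : g p = 0 := by simpa using hpZ
  rw [hgp, abs_zero] at h3
  exact absurd h3 (not_le.mpr (inv_pos.mpr hMpos))

set_option maxHeartbeats 1000000 in
/-- Backward key lemma: if `U` is open and `cl_{βX}(U) ⊆ υX` then `closure U` is
pseudocompact. -/
lemma aux_pseudocompact {U : Set X} (hU : IsOpen U)
    (h : closure (stoneCechUnit '' U : Set (StoneCech X)) ⊆ upsilonSet X) :
    IsPseudocompactSet (closure U) := by
  intro φ
  by_contra hb
  push_neg at hb
  -- ψ = |φ| on the subspace `closure U`
  set ψ : ↥(closure U) → ℝ := fun y => |φ y| with hψdef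
  have hψ : Continuous ψ := φ.continuous.abs
  -- ψ is unbounded already on (the trace of) U
  have hUb : ∀ n : ℕ, ∃ u, ∃ hu : u ∈ U, (n:ℝ) < ψ ⟨u, subset_closure hu⟩ := by
    intro n
    by_contra hc
    push_neg at hc
    obtain ⟨b, hbgt⟩ := hb (n:ℝ)
    have hC : IsClosed {y : ↥(closure U) | ψ y ≤ (n:ℝ)} :=
      isClosed_le hψ continuous_const
    have hsub : (Subtype.val ⁻¹' U : Set ↥(closure U)) ⊆ {y | ψ y ≤ (n:ℝ)} := by
      intro y hy
      have h1 := hc y.1 hy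
      simpa using h1
    have hall : ∀ y, ψ y ≤ (n:ℝ) := fun y =>
      hC.closure_subset_iff.mpr hsub (aux_dense_val U y)
    exact absurd hbgt (not_lt.mpr (hall b))
  choose a haU hφa using hUb
  -- the open sets W n ∩ closure U = {ψ > n}
  have hopen : ∀ n : ℕ, ∃ W : Set X, IsOpen W ∧
      (Subtype.val ⁻¹' W : Set ↥(closure U)) = ψ ⁻¹' Ioi (n:ℝ) :=
    fun n => isOpen_induced_iff.mp (isOpen_Ioi.preimage hψ)
  choose W hWopen hWeq using hopen
  set V : ℕ → Set X := fun n => U ∩ W n with hVdef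
  have hVopen : ∀ n, IsOpen (V n) := fun n => hU.inter (hWopen n)
  have haV : ∀ n, a n ∈ V n := by
    intro n
    refine ⟨haU n, ?_⟩
    have h1 : (⟨a n, subset_closure (haU n)⟩ : ↥(closure U)) ∈ Subtype.val ⁻¹' W n := by
      rw [hWeq]; exact hφa n
    exact h1
  have hVspec : ∀ n, ∀ y ∈ V n, ∀ hy : y ∈ closure U, (n:ℝ) < ψ ⟨y, hy⟩ := by
    intro n y hyV hy
    have h1 : (⟨y, hy⟩ : ↥(closure U)) ∈ Subtype.val ⁻¹' W n := hyV.2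
    rw [hWeq] at h1
    exact h1
  -- the family V is locally finite
  have hLF : LocallyFinite V := by
    intro x
    by_cases hx : x ∈ closure U
    · obtain ⟨W', hW'open, hW'eq⟩ := isOpen_induced_iff.mp
        (isOpen_Iio.preimage hψ : IsOpen (ψ ⁻¹' Iio (ψ ⟨x, hx⟩ + 1)))
      refine ⟨W', hW'open.mem_nhds ?_, ?_⟩
      · have h1 : (⟨x, hx⟩ : ↥(closure U)) ∈ ψ ⁻¹' Iio (ψ ⟨x, hx⟩ + 1) := by
          simp [mem_preimage]
        rw [← hW'eq] at h1
        exact h1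
      · apply Set.Finite.subset (Set.finite_Iio (⌈ψ ⟨x, hx⟩ + 1⌉₊))
        rintro n ⟨y, ⟨hyV, hyW'⟩⟩
        have hyc : y ∈ closure U := subset_closure hyV.1
        have h1 : (n:ℝ) < ψ ⟨y, hyc⟩ := hVspec n y hyV hyc
        have h2 : ψ ⟨y, hyc⟩ < ψ ⟨x, hx⟩ + 1 := by
          have h3 : (⟨y, hyc⟩ : ↥(closure U)) ∈ Subtype.val ⁻¹' W' := hyW'
          rw [hW'eq] at h3
          exact h3
        exact Nat.lt_ceil.mpr (by linarith)
    · refine ⟨(closure U)ᶜ, isClosed_closure.isOpen_compl.mem_nhds hx, ?_⟩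
      apply Set.Finite.subset Set.finite_empty
      rintro n ⟨y, ⟨hyV, hyc⟩⟩
      exact (hyc (subset_closure hyV.1)).elim
  -- bump functions supported in V n, equal to 1 at a n
  have hfn : ∀ n : ℕ, ∃ f : X → unitInterval, Continuous f ∧ f (a n) = 0 ∧
      EqOn f 1 (V n)ᶜ := fun n =>
    CompletelyRegularSpace.completely_regular (a n) (V n)ᶜ
      (hVopen n).isClosed_compl (by simp [haV n])
  choose f hfc hf0 hf1 using hfn
  set t : ℕ → X → ℝ := fun n y => ((n:ℝ) + 1) * (1 - (f n y : ℝ)) with htdef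
  have htc : ∀ n, Continuous (t n) := fun n =>
    continuous_const.mul (continuous_const.sub (continuous_subtype_val.comp (hfc n)))
  have htnn : ∀ n y, 0 ≤ t n y := by
    intro n y
    have h1 : (f n y : ℝ) ≤ 1 := (f n y).2.2
    show (0:ℝ) ≤ ((n:ℝ) + 1) * (1 - (f n y : ℝ))
    have h2 : (0:ℝ) ≤ (n:ℝ) + 1 := by positivity
    nlinarith
  have htsupp : ∀ n, Function.support (t n) ⊆ V n := by
    intro n y hy
    by_contra hyV
    apply hy
    have h1 : f n y = 1 := hf1 n hyV
    simp [htdef, h1]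
  set G : X → ℝ := fun y => ∑ᶠ n, t n y with hGdef
  have hGc : Continuous G := continuous_finsum htc (hLF.subset fun n => htsupp n)
  have hGnn : ∀ y, 0 ≤ G y := fun y => finsum_nonneg fun n => htnn n y
  have hGa : ∀ n : ℕ, (n:ℝ) + 1 ≤ G (a n) := by
    intro n
    have hfin : (Function.support fun m => t m (a n)).Finite :=
      (hLF.point_finite (a n)).subset fun m hm => htsupp m hm
    have h1 := single_le_finsum n hfin fun m => htnn m (a n)
    have h2 : t n (a n) = (n:ℝ) + 1 := by simp [htdef, hf0 n]
    rw [h2] at h1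
    exact h1
  have h1G : ∀ y, (0:ℝ) < 1 + G y := fun y => by linarith [hGnn y]
  -- the extension of G/(1+G) to βX
  set g' : X → ↥(Icc (0:ℝ) 1) := fun y =>
    ⟨G y / (1 + G y),
      div_nonneg (hGnn y) (h1G y).le,
      by rw [div_le_one (h1G y)]; linarith [hGnn y]⟩ with hg'def
  have hg'c : Continuous g' :=
    Continuous.subtype_mk (hGc.div (continuous_const.add hGc) fun y => (h1G y).ne') _
  set gβ : StoneCech X → ℝ := fun q => (stoneCechExtend (β := ↥(Icc (0:ℝ) 1)) hg'c q : ℝ) with hgβdef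
  have hgβc : Continuous gβ := continuous_subtype_val.comp (continuous_stoneCechExtend hg'c)
  have hgβι : ∀ y : X, gβ (stoneCechUnit y) = G y / (1 + G y) := by
    intro y
    have h1 : stoneCechExtend hg'c (stoneCechUnit y) = g' y :=
      congrFun (stoneCechExtend_extends hg'c) y
    simp [hgβdef, h1, hg'def]
  -- the maximum of gβ on cl (ι '' U)
  have hKc : IsCompact (closure (stoneCechUnit '' U : Set (StoneCech X))) :=
    isClosed_closure.isCompact
  have hKne : (closure (stoneCechUnit '' U : Set (StoneCech X))).Nonempty :=
    ⟨stoneCechUnit (a 0), subset_closure ⟨a 0, haU 0, rfl⟩⟩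
  obtain ⟨p, hpK, hpmax⟩ := hKc.exists_isMaxOn hKne hgβc.continuousOn
  have hgp_le : gβ p ≤ 1 := (stoneCechExtend (β := ↥(Icc (0:ℝ) 1)) hg'c p).2.2
  have hgp_ge : (1:ℝ) ≤ gβ p := by
    have hseq : ∀ n : ℕ, 1 - 1 / ((n:ℝ) + 1) ≤ gβ p := by
      intro n
      have h2 : gβ (stoneCechUnit (a n)) ≤ gβ p :=
        hpmax (subset_closure ⟨a n, haU n, rfl⟩)
      have e1 : G (a n) / (1 + G (a n)) = 1 - 1 / (1 + G (a n)) := by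
        rw [one_sub_div (h1G (a n)).ne', add_sub_cancel_left]
      have h4 : 1 / (1 + G (a n)) ≤ 1 / ((n:ℝ) + 1) := by
        apply one_div_le_one_div_of_le (by positivity)
        linarith [hGa n]
      rw [hgβι, e1] at h2
      linarith
    have hlim : Tendsto (fun n : ℕ => 1 - 1 / ((n:ℝ) + 1)) atTop (𝓝 1) := by
      have h1 := (tendsto_const_nhds (x := (1:ℝ)) (f := (atTop : Filter ℕ))).sub
        tendsto_one_div_add_atTop_nhds_zero_nat
      simpa using h1
    exact le_of_tendsto' hlim hseq
  have hgp : gβ p = 1 := le_antisymm hgp_le hgp_ge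
  -- the zero-set of gβ - 1 contains p but misses X
  set Z : Set (StoneCech X) := (fun q => gβ q - 1) ⁻¹' {0} with hZdef
  have hZ : IsZeroSet Z := ⟨⟨fun q => gβ q - 1, hgβc.sub continuous_const⟩, rfl⟩
  have hpZ : p ∈ Z := by simp [hZdef, hgp]
  obtain ⟨q, hqZ, y, rfl⟩ := h hpK Z hZ hpZ
  have hy1 : gβ (stoneCechUnit y) = 1 := by
    have h1 : gβ (stoneCechUnit y) - 1 = 0 := by simpa [hZdef] using hqZ
    linarith
  rw [hgβι, div_eq_one_iff_eq (h1G y).ne'] at hy1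
  linarith

end Aux

/-- (Comfort) A Tychonoff space `X` is locally pseudocompact if and only if
`X ⊆ int_{βX} υX`. -/
theorem comfort_locallyPseudocompact_iff (X : Type*) [TopologicalSpace X] [T2Space X]
    [CompletelyRegularSpace X] :
    (∀ x : X, ∃ U : Set X, IsOpen U ∧ x ∈ U ∧ IsPseudocompactSet (closure U)) ↔
      Set.range (stoneCechUnit : X → StoneCech X) ⊆ interior (upsilonSet X) := by
  constructor
  · rintro hloc q ⟨x, rfl⟩
    obtain ⟨U, hUopen, hxU, hUps⟩ := hloc x
    obtain ⟨O, hOopen, hxO, hOsub⟩ := aux_exists_open hUopen hxU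
    have hOcl : O ⊆ closure (stoneCechUnit '' U : Set (StoneCech X)) := by
      intro q hqO
      rw [mem_closure_iff]
      intro V hV hqV
      obtain ⟨z, hz⟩ := denseRange_stoneCechUnit.exists_mem_open (hV.inter hOopen)
        ⟨q, hqV, hqO⟩
      exact ⟨stoneCechUnit z, hz.1, Set.mem_image_of_mem _ (hOsub z hz.2)⟩
    have hOυ : O ⊆ upsilonSet X := hOcl.trans (aux_closure_subset_upsilon hUps)
    exact mem_interior.mpr ⟨O, hOυ, hOopen, hxO⟩
  · intro hsub x
    have hx : stoneCechUnit x ∈ interior (upsilonSet X) := hsub ⟨x, rfl⟩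
    obtain ⟨C, hC1, hC2⟩ := (closed_nhds_basis (stoneCechUnit x)).mem_iff.mp
      (isOpen_interior.mem_nhds hx)
    refine ⟨stoneCechUnit ⁻¹' interior C,
      isOpen_interior.preimage continuous_stoneCechUnit,
      mem_interior_iff_mem_nhds.mpr hC1.1, ?_⟩
    apply aux_pseudocompact (isOpen_interior.preimage continuous_stoneCechUnit)
    have h1 : stoneCechUnit '' (stoneCechUnit ⁻¹' interior C) ⊆ interior C :=
      Set.image_preimage_subset _ _
    calc closure (stoneCechUnit '' (stoneCechUnit ⁻¹' interior C) : Set (StoneCech X))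
        ⊆ closure (interior C) := closure_mono h1
      _ ⊆ C := closure_minimal interior_subset hC1.2
      _ ⊆ interior (upsilonSet X) := hC2
      _ ⊆ upsilonSet X := interior_subset
end
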